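/- In G(n,r,s), for any two vertices x,y with |x ∩ y| = i, the number of vertices z with |z ∩ y| = j and |z ∩ x| = s equals the sum over m from 0 to s of binomial(i,m)·binomial(r-i,s-m)·binomial(r-i,j-m)·binomial(n-2r+i, r-s-j+m). In particular, this count depends only on i, j, n, r, s and not on the choice of x and y. -/

import Mathlib

open Finset

set_option maxHeartbeats 1000000

/-- In `G(n,r,s)`, for any two vertices `x, y` with `|x ∩ y| = i`, the number of vertices `z`
with `|z ∩ y| = j` and `|z ∩ x| = s` equals
`∑_{m=0}^{s} choose i m * choose (r-i) (s-m) * choose (r-i) (j-m) * choose (n-2r+i) (r-s-j+m)`,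
where binomial coefficients with negative arguments are zero (hence the guard
`m ≤ j ∧ s + j ≤ r + m`). In particular, the count depends only on `i, j, n, r, s`. -/
theorem stmt4 (n r s i j : ℕ) (hs : s < r) (hr : r < n) (hi : i ≤ r) (hj : j ≤ r)
    (x y : Finset (Fin n)) (hx : x.card = r) (hy : y.card = r) (hxy : (x ∩ y).card = i) :
    {z : Finset (Fin n) | z.card = r ∧ (z ∩ y).card = j ∧ (z ∩ x).card = s}.ncard =
      ∑ m ∈ Finset.range (s + 1),
        (if m ≤ j ∧ s + j ≤ r + m then
          i.choose m * (r - i).choose (s - m) * (r - i).choose (j - m) *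
            (n + i - 2 * r).choose (r + m - s - j)
        else 0) := by
  classical
  -- cardinalities of the four blocks
  have hcardB : (x \ y).card = r - i := by
    have := Finset.card_sdiff_add_card_inter x y
    omega
  have hcardC : (y \ x).card = r - i := by
    have h := Finset.card_sdiff_add_card_inter y x
    rw [Finset.inter_comm] at h
    omega
  have hunle : (x ∪ y).card ≤ n := by
    simpa using Finset.card_le_univ (x ∪ y)
  have hun : (x ∪ y).card + i = 2 * r := by
    have := Finset.card_union_add_card_inter x y
    omega
  have hcardD : ((x ∪ y)ᶜ : Finset (Fin n)).card = n + i - 2 * r := by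
    rw [Finset.card_compl, Fintype.card_fin]
    omega
  -- pass from ncard to a filtered finset
  have key : {z : Finset (Fin n) | z.card = r ∧ (z ∩ y).card = j ∧ (z ∩ x).card = s}.ncard
      = (Finset.univ.filter (fun z : Finset (Fin n) =>
          z.card = r ∧ (z ∩ y).card = j ∧ (z ∩ x).card = s)).card := by
    rw [Set.ncard_eq_toFinset_card', Set.toFinset_setOf]
  rw [key]
  -- facts about any z in the fiber over m
  have hfib : ∀ m : ℕ, ∀ z : Finset (Fin n), z.card = r → (z ∩ y).card = j →
      (z ∩ x).card = s → (z ∩ (x ∩ y)).card = m →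
      m ≤ j ∧ s + j ≤ r + m ∧ m ≤ s ∧ (z ∩ (x \ y)).card = s - m ∧
        (z ∩ (y \ x)).card = j - m ∧ (z ∩ (x ∪ y)ᶜ).card = r + m - s - j := by
    intro m z hz1 hz2 hz3 hz4
    have e1 : (z ∩ x) ∩ (z ∩ y) = z ∩ (x ∩ y) := by
      ext a; simp only [Finset.mem_inter]; tauto
    have e2 : (z ∩ x) ∪ (z ∩ y) = z ∩ (x ∪ y) := by
      ext a; simp only [Finset.mem_inter, Finset.mem_union]; tauto
    have e3 : z ∩ (x \ y) = (z ∩ x) \ (z ∩ y) := by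
      ext a; simp only [Finset.mem_inter, Finset.mem_sdiff]; tauto
    have e4 : z ∩ (y \ x) = (z ∩ y) \ (z ∩ x) := by
      ext a; simp only [Finset.mem_inter, Finset.mem_sdiff]; tauto
    have e5 : z ∩ (x ∪ y)ᶜ = z \ (z ∩ (x ∪ y)) := by
      ext a; simp only [Finset.mem_inter, Finset.mem_sdiff, Finset.mem_compl,
        Finset.mem_union]; tauto
    have hmj : m ≤ j := by
      rw [← hz4, ← hz2]
      exact Finset.card_le_card (by intro a ha; simp only [Finset.mem_inter] at *; tauto)
    have hu1 : ((z ∩ x) ∪ (z ∩ y)).card + m = s + j := by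
      have := Finset.card_union_add_card_inter (z ∩ x) (z ∩ y)
      rw [e1, hz4, hz3, hz2] at this; omega
    have hule : ((z ∩ x) ∪ (z ∩ y)).card ≤ r := by
      rw [← hz1]
      refine Finset.card_le_card ?_
      intro a ha
      simp only [Finset.mem_union, Finset.mem_inter] at ha
      tauto
    have h3 : (z ∩ (x \ y)).card = s - m := by
      have := Finset.card_sdiff_add_card_inter (z ∩ x) (z ∩ y)
      rw [e1, hz4, hz3, ← e3] at this; omega
    have h4 : (z ∩ (y \ x)).card = j - m := by
      have := Finset.card_sdiff_add_card_inter (z ∩ y) (z ∩ x)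
      rw [Finset.inter_comm (z ∩ y), e1, hz4, hz2, ← e4] at this; omega
    have h5 : (z ∩ (x ∪ y)ᶜ).card = r + m - s - j := by
      have hsub : z ∩ (x ∪ y) ⊆ z := Finset.inter_subset_left
      have := Finset.card_sdiff_of_subset hsub
      rw [← e5] at this
      rw [e2] at hu1
      rw [this, hz1]
      omega
    refine ⟨hmj, ?_, ?_, h3, h4, h5⟩
    · omega
    · rw [← hz4, ← hz3]
      exact Finset.card_le_card (by intro a ha; simp only [Finset.mem_inter] at *; tauto)
  rw [Finset.card_eq_sum_card_fiberwise (f := fun z : Finset (Fin n) => (z ∩ (x ∩ y)).card)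
    (t := Finset.range (s + 1)) (by
      intro z hz
      simp only [Finset.mem_coe, Finset.mem_filter] at hz
      obtain ⟨_, hz1, hz2, hz3⟩ := hz
      have := hfib _ z hz1 hz2 hz3 rfl
      simp only [Finset.mem_coe, Finset.mem_range]
      omega)]
  refine Finset.sum_congr rfl ?_
  intro m hm
  simp only [Finset.mem_range] at hm
  by_cases hg : m ≤ j ∧ s + j ≤ r + m
  swap
  · rw [if_neg hg, Finset.card_eq_zero, Finset.filter_eq_empty_iff]
    intro z hz
    simp only [Finset.mem_filter] at hz
    obtain ⟨_, hz1, hz2, hz3⟩ := hz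
    intro hzm
    have := hfib m z hz1 hz2 hz3 hzm
    exact hg ⟨this.1, this.2.1⟩
  obtain ⟨hmj, hsjr⟩ := hg
  rw [if_pos ⟨hmj, hsjr⟩]
  rw [Finset.card_nbij'
    (i := fun z => ((z ∩ (x ∩ y), z ∩ (x \ y)), (z ∩ (y \ x), z ∩ (x ∪ y)ᶜ)))
    (j := fun w => w.1.1 ∪ w.1.2 ∪ w.2.1 ∪ w.2.2)
    (t := ((x ∩ y).powersetCard m ×ˢ (x \ y).powersetCard (s - m)) ×ˢ
      ((y \ x).powersetCard (j - m) ×ˢ ((x ∪ y)ᶜ).powersetCard (r + m - s - j)))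
    ?map1 ?map2 ?inv1 ?inv2]
  · simp only [Finset.card_product, Finset.card_powersetCard, hxy, hcardB, hcardC, hcardD]
    ring
  case map1 =>
    intro z hz
    simp only [Finset.mem_coe, Finset.mem_filter] at hz
    obtain ⟨⟨_, hz1, hz2, hz3⟩, hzm⟩ := hz
    obtain ⟨_, _, _, h3, h4, h5⟩ := hfib m z hz1 hz2 hz3 hzm
    simp only [Finset.mem_coe, Finset.mem_product, Finset.mem_powersetCard]
    exact ⟨⟨⟨Finset.inter_subset_right, hzm⟩, ⟨Finset.inter_subset_right, h3⟩⟩,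
      ⟨Finset.inter_subset_right, h4⟩, ⟨Finset.inter_subset_right, h5⟩⟩
  case map2 =>
    rintro ⟨⟨p, q⟩, u, v⟩ hw
    simp only [Finset.mem_coe, Finset.mem_product, Finset.mem_powersetCard] at hw
    obtain ⟨⟨⟨hp, hpc⟩, hq, hqc⟩, ⟨hu, huc⟩, hv, hvc⟩ := hw
    have h1 : ∀ a, a ∈ p → a ∈ x ∧ a ∈ y := fun a h => Finset.mem_inter.1 (hp h)
    have h2 : ∀ a, a ∈ q → a ∈ x ∧ a ∉ y := fun a h => Finset.mem_sdiff.1 (hq h)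
    have h3 : ∀ a, a ∈ u → a ∈ y ∧ a ∉ x := fun a h => Finset.mem_sdiff.1 (hu h)
    have h4 : ∀ a, a ∈ v → a ∉ x ∧ a ∉ y := fun a h => by
      have := hv h
      simp only [Finset.mem_compl, Finset.mem_union] at this
      tauto
    have hdpq : Disjoint p q := Finset.disjoint_left.2 fun a ha hb =>
      (h2 a hb).2 (h1 a ha).2
    have hdpu : Disjoint p u := Finset.disjoint_left.2 fun a ha hb =>
      (h3 a hb).2 (h1 a ha).1
    have hdpv : Disjoint p v := Finset.disjoint_left.2 fun a ha hb =>
      (h4 a hb).1 (h1 a ha).1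
    have hdqu : Disjoint q u := Finset.disjoint_left.2 fun a ha hb =>
      (h3 a hb).2 (h2 a ha).1
    have hdqv : Disjoint q v := Finset.disjoint_left.2 fun a ha hb =>
      (h4 a hb).1 (h2 a ha).1
    have hduv : Disjoint u v := Finset.disjoint_left.2 fun a ha hb =>
      (h4 a hb).2 (h3 a ha).1
    have hcard : (p ∪ q ∪ u ∪ v).card = p.card + q.card + u.card + v.card := by
      rw [Finset.card_union_of_disjoint (by
          simp only [Finset.disjoint_union_left]; exact ⟨⟨hdpv, hdqv⟩, hduv⟩),
        Finset.card_union_of_disjoint (by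
          simp only [Finset.disjoint_union_left]; exact ⟨hdpu, hdqu⟩),
        Finset.card_union_of_disjoint hdpq]
    have hy' : (p ∪ q ∪ u ∪ v) ∩ y = p ∪ u := by
      ext a
      have h1a := h1 a; have h2a := h2 a; have h3a := h3 a; have h4a := h4 a
      simp only [Finset.mem_inter, Finset.mem_union, Finset.mem_sdiff,
        Finset.mem_compl]
      tauto
    have hx' : (p ∪ q ∪ u ∪ v) ∩ x = p ∪ q := by
      ext a
      have h1a := h1 a; have h2a := h2 a; have h3a := h3 a; have h4a := h4 a
      simp only [Finset.mem_inter, Finset.mem_union, Finset.mem_sdiff,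
        Finset.mem_compl]
      tauto
    have hm' : (p ∪ q ∪ u ∪ v) ∩ (x ∩ y) = p := by
      ext a
      have h1a := h1 a; have h2a := h2 a; have h3a := h3 a; have h4a := h4 a
      simp only [Finset.mem_inter, Finset.mem_union, Finset.mem_sdiff,
        Finset.mem_compl]
      tauto
    simp only [Finset.mem_coe, Finset.mem_filter, Finset.mem_univ, true_and]
    refine ⟨⟨?_, ?_, ?_⟩, ?_⟩
    · rw [hcard, hpc, hqc, huc, hvc]; omega
    · rw [hy', Finset.card_union_of_disjoint hdpu, hpc, huc]; omega
    · rw [hx', Finset.card_union_of_disjoint hdpq, hpc, hqc]; omega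
    · rw [hm', hpc]
  case inv1 =>
    intro z hz
    ext a
    simp only [Finset.mem_union, Finset.mem_inter, Finset.mem_sdiff, Finset.mem_compl,
      Finset.mem_union]
    tauto
  case inv2 =>
    rintro ⟨⟨p, q⟩, u, v⟩ hw
    simp only [Finset.mem_coe, Finset.mem_product, Finset.mem_powersetCard] at hw
    obtain ⟨⟨⟨hp, hpc⟩, hq, hqc⟩, ⟨hu, huc⟩, hv, hvc⟩ := hw
    have h1 : ∀ a, a ∈ p → a ∈ x ∧ a ∈ y := fun a h => Finset.mem_inter.1 (hp h)
    have h2 : ∀ a, a ∈ q → a ∈ x ∧ a ∉ y := fun a h => Finset.mem_sdiff.1 (hq h)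
    have h3 : ∀ a, a ∈ u → a ∈ y ∧ a ∉ x := fun a h => Finset.mem_sdiff.1 (hu h)
    have h4 : ∀ a, a ∈ v → a ∉ x ∧ a ∉ y := fun a h => by
      have := hv h
      simp only [Finset.mem_compl, Finset.mem_union] at this
      tauto
    have c1 : (p ∪ q ∪ u ∪ v) ∩ (x ∩ y) = p := by
      ext a
      have h1a := h1 a; have h2a := h2 a; have h3a := h3 a; have h4a := h4 a
      simp only [Finset.mem_inter, Finset.mem_union, Finset.mem_sdiff,
        Finset.mem_compl]
      tauto
    have c2 : (p ∪ q ∪ u ∪ v) ∩ (x \ y) = q := by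
      ext a
      have h1a := h1 a; have h2a := h2 a; have h3a := h3 a; have h4a := h4 a
      simp only [Finset.mem_inter, Finset.mem_union, Finset.mem_sdiff,
        Finset.mem_compl]
      tauto
    have c3 : (p ∪ q ∪ u ∪ v) ∩ (y \ x) = u := by
      ext a
      have h1a := h1 a; have h2a := h2 a; have h3a := h3 a; have h4a := h4 a
      simp only [Finset.mem_inter, Finset.mem_union, Finset.mem_sdiff,
        Finset.mem_compl]
      tauto
    have c4 : (p ∪ q ∪ u ∪ v) ∩ (x ∪ y)ᶜ = v := by
      ext a
      have h1a := h1 a; have h2a := h2 a; have h3a := h3 a; have h4a := h4 a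
      simp only [Finset.mem_inter, Finset.mem_union, Finset.mem_sdiff,
        Finset.mem_compl]
      tauto
    simp only [c1, c2, c3, c4]
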